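/- arXiv:math-ph/0305060 — 3 statements merged into one kernel-verified Lean document; each statement's English description precedes it below -/
import Mathlib

section
/- Let f : (0,∞) → ℝ be five times continuously differentiable with f(1) = 1 and f(x) = x·f(1/x) for all x > 0. Then f′(1) = 1/2, 2·f⁽³⁾(1) + 3·f⁽²⁾(1) = 0, and f⁽⁵⁾(1) = −(15·f⁽⁴⁾(1) + 60·f⁽³⁾(1) + 60·f⁽²⁾(1))/2. -/
/-- For a five times continuously differentiable `f : (0,∞) → ℝ`
with `f 1 = 1` and `f x = x * f (1/x)`, one has `f′(1) = 1/2`,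
`2 f⁽³⁾(1) + 3 f⁽²⁾(1) = 0` and
`f⁽⁵⁾(1) = -(15 f⁽⁴⁾(1) + 60 f⁽³⁾(1) + 60 f⁽²⁾(1))/2`. -/
theorem stmt_0 (f : ℝ → ℝ)
    (hf : ContDiffOn ℝ 5 f (Set.Ioi 0))
    (hf1 : f 1 = 1)
    (hsym : ∀ x > (0:ℝ), f x = x * f (1/x)) :
    deriv f 1 = 1/2 ∧
    2 * iteratedDeriv 3 f 1 + 3 * iteratedDeriv 2 f 1 = 0 ∧
    iteratedDeriv 5 f 1 =
      -(15 * iteratedDeriv 4 f 1 + 60 * iteratedDeriv 3 f 1 + 60 * iteratedDeriv 2 f 1) / 2 := by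
  have hsopen : IsOpen (Set.Ioi (0:ℝ)) := isOpen_Ioi
  -- smoothness of iterated derivatives
  have hD : ∀ k : ℕ, k ≤ 5 → ContDiffOn ℝ ((5 - k : ℕ) : ℕ∞) (deriv^[k] f) (Set.Ioi 0) := by
    intro k
    induction k with
    | zero => intro _; simpa using hf
    | succ n ih =>
      intro hn
      have h := ih (by omega)
      rw [Function.iterate_succ_apply']
      refine h.deriv_of_isOpen hsopen ?_
      have h2 : ((5 - (n+1) : ℕ) : ℕ∞) + 1 = ((5 - n : ℕ) : ℕ∞) := by
        norm_cast
        omega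
      exact_mod_cast le_of_eq h2
  -- differentiability of iterated derivatives up to order 4
  have hdiff : ∀ k : ℕ, k ≤ 4 → ∀ x ∈ Set.Ioi (0:ℝ), DifferentiableAt ℝ (deriv^[k] f) x := by
    intro k hk x hx
    have h1 : (1 : ℕ∞) ≤ ((5 - k : ℕ) : ℕ∞) := by
      norm_cast
      omega
    have h := (hD k (by omega)).differentiableOn (by norm_cast; omega)
    exact h.differentiableAt (hsopen.mem_nhds hx)
  have hinvmem : ∀ x : ℝ, x ∈ Set.Ioi (0:ℝ) → (1/x) ∈ Set.Ioi (0:ℝ) := by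
    intro x hx
    simp only [Set.mem_Ioi] at *
    positivity
  -- key derivative computation
  have hkey : ∀ k : ℕ, k ≤ 4 → ∀ m : ℕ, ∀ x ∈ Set.Ioi (0:ℝ),
      HasDerivAt (fun y => deriv^[k] f (1/y) * (y⁻¹)^m)
        (-(deriv^[k+1] f (1/x)) * (x⁻¹)^(m+2) - m * deriv^[k] f (1/x) * (x⁻¹)^(m+1)) x := by
    intro k hk m x hx
    have hx0 : x ≠ 0 := ne_of_gt hx
    have hinv := hinvmem x hx
    have h1 : HasDerivAt (fun y : ℝ => 1/y) (-((x:ℝ)^2)⁻¹) x := by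
      simpa [one_div] using hasDerivAt_inv hx0
    have h2 : HasDerivAt (deriv^[k] f) (deriv^[k+1] f (1/x)) (1/x) := by
      have := (hdiff k hk (1/x) hinv).hasDerivAt
      rwa [Function.iterate_succ_apply']
    have h3 := h2.comp x h1
    have h4 : HasDerivAt (fun y : ℝ => (y⁻¹)^m)
        ((m : ℝ) * (x⁻¹)^(m-1) * (-(x^2)⁻¹)) x := (hasDerivAt_inv hx0).pow m
    have h5 := h3.mul h4
    have h6 : HasDerivAt (fun y => deriv^[k] f (1/y) * (y⁻¹)^m)
        (deriv^[k+1] f (1/x) * -(x^2)⁻¹ * (x⁻¹)^m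
          + deriv^[k] f (1/x) * ((m : ℝ) * (x⁻¹)^(m-1) * (-(x^2)⁻¹))) x := h5
    convert h6 using 1
    have hx2 : ((x:ℝ)^2)⁻¹ = (x⁻¹)^2 := by rw [inv_pow]
    rcases m with _ | n
    · simp only [hx2, Nat.cast_zero, pow_zero, Nat.zero_sub, mul_one, zero_mul, mul_zero,
        add_zero, zero_add, sub_zero]
      ring
    · simp only [hx2, Nat.succ_sub_one]
      push_cast
      ring
  -- first derivative identity
  have E1 : ∀ x ∈ Set.Ioi (0:ℝ),
      deriv^[1] f x = deriv^[0] f (1/x) * (x⁻¹)^0 - deriv^[1] f (1/x) * (x⁻¹)^1 := by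
    intro x hx
    have hx0 : x ≠ 0 := ne_of_gt hx
    have heq : f =ᶠ[nhds x] (fun y => y * f (1/y)) :=
      Filter.eventuallyEq_of_mem (hsopen.mem_nhds hx) (fun y hy => hsym y hy)
    have h1 : HasDerivAt (fun y : ℝ => 1/y) (-((x:ℝ)^2)⁻¹) x := by
      simpa [one_div] using hasDerivAt_inv hx0
    have h2 : HasDerivAt f (deriv^[1] f (1/x)) (1/x) := by
      have := (hdiff 0 (by omega) (1/x) (hinvmem x hx)).hasDerivAt
      simpa using this
    have h3 : HasDerivAt (fun y : ℝ => y * f (1/y))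
        (1 * f (1/x) + x * (deriv^[1] f (1/x) * -(x^2)⁻¹)) x :=
      (hasDerivAt_id x).mul (h2.comp x h1)
    rw [Function.iterate_one, heq.deriv_eq, h3.deriv]
    simp only [Function.iterate_zero, id_eq, Function.iterate_one]
    field_simp
    ring
  -- second derivative identity
  have E2 : ∀ x ∈ Set.Ioi (0:ℝ), deriv^[2] f x = deriv^[2] f (1/x) * (x⁻¹)^3 := by
    intro x hx
    have heq : deriv^[1] f =ᶠ[nhds x]
        (fun y => deriv^[0] f (1/y) * (y⁻¹)^0 - deriv^[1] f (1/y) * (y⁻¹)^1) :=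
      Filter.eventuallyEq_of_mem (hsopen.mem_nhds hx) E1
    have h := ((hkey 0 (by omega) 0 x hx).sub (hkey 1 (by omega) 1 x hx))
    have hiter : deriv^[2] f = deriv (deriv^[1] f) := Function.iterate_succ_apply' deriv 1 f
    simp only [Pi.sub_def] at h
    rw [congrFun hiter x, heq.deriv_eq, h.deriv]
    push_cast
    ring
  -- third derivative identity
  have E3 : ∀ x ∈ Set.Ioi (0:ℝ),
      deriv^[3] f x = -(deriv^[3] f (1/x) * (x⁻¹)^5) - 3 * (deriv^[2] f (1/x) * (x⁻¹)^4) := by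
    intro x hx
    have heq : deriv^[2] f =ᶠ[nhds x] (fun y => deriv^[2] f (1/y) * (y⁻¹)^3) :=
      Filter.eventuallyEq_of_mem (hsopen.mem_nhds hx) E2
    have h := hkey 2 (by omega) 3 x hx
    have hiter : deriv^[3] f = deriv (deriv^[2] f) := Function.iterate_succ_apply' deriv 2 f
    rw [congrFun hiter x, heq.deriv_eq, h.deriv]
    push_cast
    ring
  -- fourth derivative identity
  have E4 : ∀ x ∈ Set.Ioi (0:ℝ),
      deriv^[4] f x = deriv^[4] f (1/x) * (x⁻¹)^7 + 8 * (deriv^[3] f (1/x) * (x⁻¹)^6)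
        + 12 * (deriv^[2] f (1/x) * (x⁻¹)^5) := by
    intro x hx
    have heq : deriv^[3] f =ᶠ[nhds x]
        (fun y => -(deriv^[3] f (1/y) * (y⁻¹)^5) - 3 * (deriv^[2] f (1/y) * (y⁻¹)^4)) :=
      Filter.eventuallyEq_of_mem (hsopen.mem_nhds hx) E3
    have h := (((hkey 3 (by omega) 5 x hx).neg).sub ((hkey 2 (by omega) 4 x hx).const_mul 3))
    have hiter : deriv^[4] f = deriv (deriv^[3] f) := Function.iterate_succ_apply' deriv 3 f
    simp only [Pi.sub_def, Pi.neg_def] at h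
    rw [congrFun hiter x, heq.deriv_eq, h.deriv]
    push_cast
    ring
  -- fifth derivative relation at 1
  have h1mem : (1:ℝ) ∈ Set.Ioi (0:ℝ) := by norm_num
  have E5 : deriv^[5] f 1 = -(deriv^[5] f 1) - 15 * deriv^[4] f 1 - 60 * deriv^[3] f 1
      - 60 * deriv^[2] f 1 := by
    have heq : deriv^[4] f =ᶠ[nhds (1:ℝ)]
        (fun y => deriv^[4] f (1/y) * (y⁻¹)^7 + 8 * (deriv^[3] f (1/y) * (y⁻¹)^6)
          + 12 * (deriv^[2] f (1/y) * (y⁻¹)^5)) :=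
      Filter.eventuallyEq_of_mem (hsopen.mem_nhds h1mem) E4
    have h := ((hkey 4 (by omega) 7 1 h1mem).add
      ((hkey 3 (by omega) 6 1 h1mem).const_mul 8)).add
      ((hkey 2 (by omega) 5 1 h1mem).const_mul 12)
    have hiter : deriv^[5] f = deriv (deriv^[4] f) := Function.iterate_succ_apply' deriv 4 f
    have hval : deriv (deriv^[4] f) 1
        = -(deriv^[4+1] f (1/1)) * ((1:ℝ)⁻¹)^(7+2) - (7:ℕ) * deriv^[4] f (1/1) * ((1:ℝ)⁻¹)^(7+1)
          + 8 * (-(deriv^[3+1] f (1/1)) * ((1:ℝ)⁻¹)^(6+2) - (6:ℕ) * deriv^[3] f (1/1) * ((1:ℝ)⁻¹)^(6+1))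
          + 12 * (-(deriv^[2+1] f (1/1)) * ((1:ℝ)⁻¹)^(5+2) - (5:ℕ) * deriv^[2] f (1/1) * ((1:ℝ)⁻¹)^(5+1)) := by
      simp only [Pi.add_def] at h
      rw [heq.deriv_eq, h.deriv]
    have hone : (1:ℝ)/1 = 1 := by norm_num
    rw [hone] at hval
    simp only [inv_one, one_pow, mul_one] at hval
    have h51 : deriv^[5] f 1 = deriv (deriv^[4] f) 1 := congrFun hiter 1
    have hA : deriv^[4+1] f (1:ℝ) = deriv^[5] f 1 := rfl
    have hB : deriv^[3+1] f (1:ℝ) = deriv^[4] f 1 := rfl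
    have hC : deriv^[2+1] f (1:ℝ) = deriv^[3] f 1 := rfl
    rw [hA, hB, hC] at hval
    have hfin := h51.trans hval
    push_cast at hfin
    linarith
  -- conclude
  have hd1 : deriv f 1 = 1/2 := by
    have h := E1 1 h1mem
    simp only [Function.iterate_one, Function.iterate_zero, id_eq, one_div, inv_one,
      pow_zero, pow_one, mul_one, hf1] at h
    linarith
  refine ⟨hd1, ?_, ?_⟩
  · have h := E3 1 h1mem
    simp only [one_div, inv_one, one_pow, mul_one] at h
    rw [iteratedDeriv_eq_iterate, iteratedDeriv_eq_iterate]
    linarith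
  · rw [iteratedDeriv_eq_iterate, iteratedDeriv_eq_iterate, iteratedDeriv_eq_iterate,
      iteratedDeriv_eq_iterate]
    linarith [E5]
end

section
/- Let f : (0,∞) → ℝ be continuously differentiable with f(x) > 0 for all x > 0, f(1) = 1, and f(x) = x·f(1/x) for all x > 0, let c(x,y) = 1/(y·f(x/y)), and fix x, y > 0 with x ≠ y. Define h₁(x,q,y) = (c(x,q) − y·c(x,y)·c(q,y))/((x−y)(q−y)·c(x,y)·c(q,y)) for q > 0, q ≠ y. Then: (i) lim_{q→x} h₁(x,q,y) = (1 − x·y·c(x,y)²)/(x·(x−y)²·c(x,y)²); (ii) lim_{q→x} (c(x,q) − q·c(x,y)·c(q,y))/((x−q)(y−q)·c(x,y)·c(q,y)) = −(1/2)·(c(x,y) + 2x·∂₁c(x,y))/((x−y)·c(x,y)). -/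
open Filter Topology Set

/-- The values of `h₁` at coincident arguments, computed as limits:
(i) `h₁(x,x,y) = lim_{q→x} h₁(x,q,y) = (1 - xy c(x,y)²)/(x (x-y)² c(x,y)²)`;
(ii) `h₁(x,y,x) = lim_{q→x} h₁(x,y,q)
      = -(1/2) (c(x,y) + 2x ∂₁c(x,y))/((x-y) c(x,y))`,
where `c(x,y) = 1/(y f(x/y))` is the Morozova–Chentsov function and
`h₁(x,y,z) = (c(x,y) - z c(x,z) c(y,z))/((x-z)(y-z) c(x,z) c(y,z))`. -/
theorem stmt_3 (f : ℝ → ℝ)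
    (hf : ContDiffOn ℝ 1 f (Set.Ioi 0))
    (hpos : ∀ x > (0:ℝ), 0 < f x)
    (hf1 : f 1 = 1)
    (hsym : ∀ x > (0:ℝ), f x = x * f (1/x))
    (c : ℝ → ℝ → ℝ)
    (hc : ∀ x > (0:ℝ), ∀ y > (0:ℝ), c x y = 1 / (y * f (x/y)))
    (x y : ℝ) (hx : 0 < x) (hy : 0 < y) (hxy : x ≠ y) :
    Tendsto (fun q => (c x q - y * c x y * c q y) /
        ((x - y) * (q - y) * c x y * c q y)) (𝓝[≠] x)
      (𝓝 ((1 - x * y * (c x y)^2) / (x * (x - y)^2 * (c x y)^2))) ∧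
    Tendsto (fun q => (c x y - q * c x q * c y q) /
        ((x - q) * (y - q) * c x q * c y q)) (𝓝[≠] x)
      (𝓝 (-(1/2) * (c x y + 2 * x * derivWithin (fun z => c z y) (Set.Ioi 0) x) /
          ((x - y) * c x y))) := by
  have hdiff : ∀ z ∈ Set.Ioi (0:ℝ), DifferentiableAt ℝ f z := fun z hz =>
    (hf.contDiffAt (isOpen_Ioi.mem_nhds hz)).differentiableAt one_ne_zero
  have hcont : ∀ z ∈ Set.Ioi (0:ℝ), ContinuousAt f z := fun z hz => (hdiff z hz).continuousAt
  -- f'(1) = 1/2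
  have hd1 : deriv f 1 = 1/2 := by
    have heq : (fun z : ℝ => z * f z⁻¹) =ᶠ[𝓝 (1:ℝ)] f := by
      filter_upwards [isOpen_Ioi.mem_nhds (show (1:ℝ) ∈ Ioi 0 by norm_num)] with z hz
      simpa [one_div] using (hsym z hz).symm
    have h2 : HasDerivAt (fun z : ℝ => z * f z⁻¹)
        (1 * f 1⁻¹ + 1 * (deriv f (1:ℝ)⁻¹ * -((1:ℝ)^2)⁻¹)) 1 := by
      have hin : HasDerivAt (fun z : ℝ => z⁻¹) (-((1:ℝ)^2)⁻¹) 1 := hasDerivAt_inv one_ne_zero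
      have hfo : HasDerivAt f (deriv f (1:ℝ)⁻¹) ((1:ℝ)⁻¹) :=
        (hdiff (1:ℝ)⁻¹ (by norm_num)).hasDerivAt
      exact (hasDerivAt_id 1).mul (hfo.comp 1 hin)
    have he := heq.deriv_eq
    rw [h2.deriv] at he
    simp only [inv_one, hf1, one_pow] at he
    linarith
  -- symmetric form of c
  have hcs : ∀ z > (0:ℝ), ∀ w > (0:ℝ), c z w = (z * f (w/z))⁻¹ := by
    intro z hz w hw
    rw [hc z hz w hw, one_div]
    congr 1
    have h := hsym (z/w) (div_pos hz hw)
    rw [one_div_div] at h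
    rw [h]
    field_simp
  -- basic positivity
  have hFy : 0 < f (x/y) := hpos _ (div_pos hx hy)
  have hCy : c x y = (y * f (x/y))⁻¹ := by rw [hc x hx y hy, one_div]
  have hC : c x y = (x * f (y/x))⁻¹ := hcs x hx y hy
  have hCpos : 0 < c x y := by rw [hCy]; positivity
  have hxmy : x - y ≠ 0 := sub_ne_zero.mpr hxy
  constructor
  · -- PART (i): continuity
    have hfx : ContinuousAt (fun q : ℝ => f (x/q)) x := by
      have h1 : ContinuousAt f (x/x) := by rw [div_self hx.ne']; exact hcont 1 (by norm_num)
      exact h1.comp (continuousAt_const.div continuousAt_id hx.ne')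
    have hfq : ContinuousAt (fun q : ℝ => f (q/y)) x :=
      ContinuousAt.comp (f := fun q : ℝ => q / y) (hcont (x/y) (div_pos hx hy))
        (continuousAt_id.div continuousAt_const hy.ne')
    have h1ne : x * f (x/x) ≠ 0 := by rw [div_self hx.ne', hf1]; simpa using hx.ne'
    have h2ne : y * f (x/y) ≠ 0 := by positivity
    have key1 : Tendsto (fun q : ℝ => ((q * f (x/q))⁻¹ - y * c x y * (y * f (q/y))⁻¹) /
        ((x - y) * (q - y) * c x y * (y * f (q/y))⁻¹)) (𝓝 x)
        (𝓝 (((x * f (x/x))⁻¹ - y * c x y * (y * f (x/y))⁻¹) /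
        ((x - y) * (x - y) * c x y * (y * f (x/y))⁻¹))) := by
      apply ContinuousAt.tendsto
      apply ContinuousAt.div
      · exact ((continuousAt_id.mul hfx).inv₀ h1ne).sub
          (continuousAt_const.mul ((continuousAt_const.mul hfq).inv₀ h2ne))
      · exact (((continuousAt_const.mul (continuousAt_id.sub continuousAt_const)).mul
          continuousAt_const).mul ((continuousAt_const.mul hfq).inv₀ h2ne))
      · exact mul_ne_zero (mul_ne_zero (mul_ne_zero hxmy hxmy) hCpos.ne') (inv_ne_zero h2ne)
    have hval : ((x * f (x/x))⁻¹ - y * c x y * (y * f (x/y))⁻¹) /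
        ((x - y) * (x - y) * c x y * (y * f (x/y))⁻¹)
        = (1 - x * y * (c x y)^2) / (x * (x - y)^2 * (c x y)^2) := by
      rw [div_self hx.ne', hf1, ← hCy]
      field_simp
    rw [hval] at key1
    refine Tendsto.congr' ?_ (key1.mono_left nhdsWithin_le_nhds)
    filter_upwards [mem_nhdsWithin_of_mem_nhds (isOpen_Ioi.mem_nhds (show x ∈ Ioi 0 from hx))]
      with q hq
    rw [hc x hx q hq, hc q hq y hy, one_div, one_div]
  · -- PART (ii)
    have hyx : (0:ℝ) < y/x := div_pos hy hx
    have ha : 0 < f (y/x) := hpos _ hyx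
    have hxx1 : x * x⁻¹ = 1 := mul_inv_cancel₀ hx.ne'
    have hyxi : y * x⁻¹ = y / x := (div_eq_mul_inv y x).symm
    set b := deriv f (y/x) with hb_def
    have hinner1 : HasDerivAt (fun q : ℝ => x * q⁻¹) (x * -((x:ℝ)^2)⁻¹) x :=
      (hasDerivAt_inv hx.ne').const_mul x
    have hinner2 : HasDerivAt (fun q : ℝ => y * q⁻¹) (y * -((x:ℝ)^2)⁻¹) x :=
      (hasDerivAt_inv hx.ne').const_mul y
    have hf1' : HasDerivAt (fun q : ℝ => f (x * q⁻¹)) ((1/2) * (x * -((x:ℝ)^2)⁻¹)) x := by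
      have hfo : HasDerivAt f (1/2 : ℝ) (x * x⁻¹) := by
        rw [hxx1, ← hd1]; exact (hdiff 1 (by norm_num)).hasDerivAt
      exact hfo.comp x hinner1
    have hf2' : HasDerivAt (fun q : ℝ => f (y * q⁻¹)) (b * (y * -((x:ℝ)^2)⁻¹)) x := by
      have hfo : HasDerivAt f b (y * x⁻¹) := by
        rw [hyxi, hb_def]; exact (hdiff (y/x) hyx).hasDerivAt
      exact hfo.comp x hinner2
    have huxval : x * f (x * x⁻¹) * f (y * x⁻¹) = x * f (y/x) := by
      rw [hxx1, hf1, hyxi]; ring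
    have huxne : x * f (x * x⁻¹) * f (y * x⁻¹) ≠ 0 := by rw [huxval]; positivity
    have hN : HasDerivAt (fun q : ℝ => c x y - (q * f (x * q⁻¹) * f (y * q⁻¹))⁻¹)
        (-(-((1 * f (x * x⁻¹) + x * ((1/2) * (x * -((x:ℝ)^2)⁻¹))) * f (y * x⁻¹)
            + x * f (x * x⁻¹) * (b * (y * -((x:ℝ)^2)⁻¹)))
          / (x * f (x * x⁻¹) * f (y * x⁻¹))^2)) x :=
      ((((hasDerivAt_id x).mul hf1').mul hf2').inv huxne).const_sub (c x y)
    have hslope := hasDerivAt_iff_tendsto_slope.mp hN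
    -- the continuous factor G
    have hG : Tendsto (fun q : ℝ => -(q * (q * f (x * q⁻¹) * f (y * q⁻¹))) / (y - q)) (𝓝 x)
        (𝓝 (-(x * (x * f (x * x⁻¹) * f (y * x⁻¹))) / (y - x))) := by
      apply ContinuousAt.tendsto
      apply ContinuousAt.div
      · exact (continuousAt_id.mul
          ((continuousAt_id.mul hf1'.continuousAt).mul hf2'.continuousAt)).neg
      · exact continuousAt_const.sub continuousAt_id
      · exact sub_ne_zero.mpr (Ne.symm hxy)
    have hmain := hslope.mul (hG.mono_left nhdsWithin_le_nhds)
    -- derivWithin computation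
    have hvne : x * f (y * x⁻¹) ≠ 0 := by rw [hyxi]; positivity
    have hder : derivWithin (fun z => c z y) (Set.Ioi 0) x
        = -(1 * f (y * x⁻¹) + x * (b * (y * -((x:ℝ)^2)⁻¹))) / (x * f (y * x⁻¹))^2 := by
      have hEq : Set.EqOn (fun z => c z y) (fun z : ℝ => (z * f (y * z⁻¹))⁻¹) (Set.Ioi 0) := by
        intro z hz
        simp only
        rw [hcs z hz y hy, div_eq_mul_inv]
      rw [derivWithin_congr hEq (hEq hx), derivWithin_of_mem_nhds (isOpen_Ioi.mem_nhds hx)]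
      exact (((hasDerivAt_id x).mul hf2').inv hvne).deriv
    -- identify the limit value
    have hNx0 : c x y - (x * f (x * x⁻¹) * f (y * x⁻¹))⁻¹ = 0 := by
      rw [huxval, hC, sub_self]
    have hlim : -(-((1 * f (x * x⁻¹) + x * ((1/2) * (x * -((x:ℝ)^2)⁻¹))) * f (y * x⁻¹)
            + x * f (x * x⁻¹) * (b * (y * -((x:ℝ)^2)⁻¹)))
          / (x * f (x * x⁻¹) * f (y * x⁻¹))^2)
        * (-(x * (x * f (x * x⁻¹) * f (y * x⁻¹))) / (y - x))
        = -(1/2) * (c x y + 2 * x * derivWithin (fun z => c z y) (Set.Ioi 0) x)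
          / ((x - y) * c x y) := by
      rw [hder, hC, hxx1, hf1, hyxi]
      have hfyx := ha.ne'
      have hymx : y - x ≠ 0 := sub_ne_zero.mpr (Ne.symm hxy)
      field_simp
      ring
    rw [hlim] at hmain
    refine hmain.congr' ?_
    filter_upwards [mem_nhdsWithin_of_mem_nhds (isOpen_Ioi.mem_nhds (show x ∈ Ioi 0 from hx)),
      mem_nhdsWithin_of_mem_nhds (isOpen_compl_singleton.mem_nhds hxy),
      self_mem_nhdsWithin] with q hq hqy hqx
    have hq0 : (0:ℝ) < q := hq
    have hqy' : q ≠ y := hqy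
    have hqx' : q ≠ x := hqx
    have hfxq : 0 < f (x/q) := hpos _ (div_pos hx hq0)
    have hfyq : 0 < f (y/q) := hpos _ (div_pos hy hq0)
    rw [slope_def_field, hc x hx q hq0, hc y hy q hq0, hNx0, sub_zero]
    simp only [div_eq_mul_inv]
    have h1 : q - x ≠ 0 := sub_ne_zero.mpr hqx'
    have h2 : y - q ≠ 0 := sub_ne_zero.mpr (Ne.symm hqy')
    have h3 : x - q ≠ 0 := sub_ne_zero.mpr (Ne.symm hqx')
    field_simp
    ring
end

section
/- Let f : (0,∞) → ℝ be twice continuously differentiable with f(x) > 0 for all x > 0, f(1) = 1, and f(x) = x·f(1/x) for all x > 0. Let a ∈ (−1,1) with a ≠ 0, and set x = (1+a)/2, y = (1−a)/2 and c = (1−a)/(1+a). Then sh₁(x,y) − (1/2)·sh₂(x,y) + 2·sh₃(x,y) − sh₄(x,y) + 3/2 = 14(a−1)·f′(c)²/((1+a)³·f(c)²) + 2(a²+7a−6)·f′(c)/((1+a)²·a·f(c)) + 8(1−a)·f″(c)/((1+a)³·f(c)) + 2(1+a)·f(c)/a² + (3a³+5a²+8a−4)/(2(1+a)·a²). -/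
open Filter Topology Set

/-- The Morozova–Chentsov function `c(x,y) = 1/(y·f(x/y))` of `f`. -/
noncomputable def MC (f : ℝ → ℝ) (x y : ℝ) : ℝ := 1 / (y * f (x / y))

/-- `∂₁(log c)(z,x)`: the partial derivative of `log c` in its first variable. -/
noncomputable def d1logMC (f : ℝ → ℝ) (z x : ℝ) : ℝ :=
  derivWithin (fun w => Real.log (MC f w x)) (Set.Ioi 0) z

/-- `h₁(x,y,z) = (c(x,y) − z·c(x,z)·c(y,z))/((x−z)(y−z)·c(x,z)·c(y,z))`. -/
noncomputable def H1 (f : ℝ → ℝ) (x y z : ℝ) : ℝ :=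
  (MC f x y - z * MC f x z * MC f y z) / ((x - z) * (y - z) * MC f x z * MC f y z)

/-- `h₂(x,y,z) = (c(x,z)−c(y,z))²/((x−y)²·c(x,y)·c(x,z)·c(y,z))`. -/
noncomputable def H2 (f : ℝ → ℝ) (x y z : ℝ) : ℝ :=
  (MC f x z - MC f y z)^2 / ((x - y)^2 * MC f x y * MC f x z * MC f y z)

/-- `h₃(x,y,z) = (z/(x−y))·(∂₁(log c)(z,x) − ∂₁(log c)(z,y))`. -/
noncomputable def H3 (f : ℝ → ℝ) (x y z : ℝ) : ℝ :=
  z / (x - y) * (d1logMC f z x - d1logMC f z y)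

/-- `h₄(x,y,z) = z·∂₁(log c)(z,x)·∂₁(log c)(z,y)`. -/
noncomputable def H4 (f : ℝ → ℝ) (x y z : ℝ) : ℝ :=
  z * d1logMC f z x * d1logMC f z y

/-- The sum-function `sh(x,y) = h(x,x,y) + 2·h(x,y,x) + h(y,y,x) + 2·h(y,x,y)`,
where the values of `h` at coincident arguments are defined by taking limits. -/
noncomputable def sh (h : ℝ → ℝ → ℝ → ℝ) (x y : ℝ) : ℝ :=
  limUnder (𝓝[≠] x) (fun q => h x q y) + 2 * limUnder (𝓝[≠] x) (fun q => h x y q) +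
  limUnder (𝓝[≠] y) (fun q => h y q x) + 2 * limUnder (𝓝[≠] y) (fun q => h y x q)

/- ### Auxiliary lemmas -/

lemma aux_div (a b c : ℝ) (hc : c ≠ 0) : a / c / (b / c) = a / b := by
  rcases eq_or_ne b 0 with h | h
  · simp [h]
  · field_simp

section Aux

variable (f : ℝ → ℝ)

lemma hasDerivAt_f (hf : ContDiffOn ℝ 2 f (Set.Ioi 0)) {z : ℝ} (hz : 0 < z) :
    HasDerivAt f (deriv f z) z :=
  ((hf.contDiffAt (Ioi_mem_nhds hz)).differentiableAt (by norm_num)).hasDerivAt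

lemma hasDerivAt_deriv_f (hf : ContDiffOn ℝ 2 f (Set.Ioi 0)) {z : ℝ} (hz : 0 < z) :
    HasDerivAt (deriv f) (deriv (deriv f) z) z := by
  have h2 : ContDiffOn ℝ 1 (deriv f) (Set.Ioi 0) :=
    hf.deriv_of_isOpen isOpen_Ioi (by norm_num)
  exact ((h2.contDiffAt (Ioi_mem_nhds hz)).differentiableAt one_ne_zero).hasDerivAt

lemma inner_fst (hf : ContDiffOn ℝ 2 f (Set.Ioi 0)) {z y : ℝ} (hz : 0 < z) (hy : 0 < y) :
    HasDerivAt (fun w => y * f (w / y)) (deriv f (z / y)) z := by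
  have h1 : HasDerivAt (fun w : ℝ => w / y) (1 / y) z := (hasDerivAt_id z).div_const y
  have h2 : HasDerivAt (fun w => f (w / y)) (deriv f (z / y) * (1 / y)) z :=
    (hasDerivAt_f f hf (div_pos hz hy)).comp z h1
  have h3 := h2.const_mul y
  refine h3.congr_deriv (Eq.symm ?_)
  field_simp

lemma inner_snd (hf : ContDiffOn ℝ 2 f (Set.Ioi 0)) {x z : ℝ} (hx : 0 < x) (hz : 0 < z) :
    HasDerivAt (fun q => q * f (x / q)) (f (x / z) - (x / z) * deriv f (x / z)) z := by
  have h1 : HasDerivAt (fun q : ℝ => x / q) (-(x / z ^ 2)) z := by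
    simp only [div_eq_mul_inv]
    refine ((hasDerivAt_inv hz.ne').const_mul x).congr_deriv (Eq.symm ?_)
    ring
  have h2 : HasDerivAt (fun q => f (x / q)) (deriv f (x / z) * (-(x / z ^ 2))) z :=
    (hasDerivAt_f f hf (div_pos hx hz)).comp z h1
  have h3 := (hasDerivAt_id z).mul h2
  refine h3.congr_deriv (Eq.symm ?_)
  simp only [Pi.mul_apply, Pi.neg_apply, Pi.sub_apply, id_eq]
  field_simp
  all_goals ring

lemma MC_pos (hpos : ∀ x > (0:ℝ), 0 < f x) {p q : ℝ} (hp : 0 < p) (hq : 0 < q) :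
    0 < MC f p q := by
  have := hpos (p / q) (div_pos hp hq)
  rw [MC]
  positivity

lemma MC_symm (hsym : ∀ x > (0:ℝ), f x = x * f (1/x)) {p q : ℝ} (hp : 0 < p) (hq : 0 < q) :
    MC f p q = MC f q p := by
  rw [MC, MC, hsym (p / q) (div_pos hp hq), one_div_div]
  congr 1
  field_simp

lemma MC_fst (hf : ContDiffOn ℝ 2 f (Set.Ioi 0)) (hpos : ∀ x > (0:ℝ), 0 < f x)
    {z y : ℝ} (hz : 0 < z) (hy : 0 < y) :
    HasDerivAt (fun w => MC f w y) (-deriv f (z / y) / (y * f (z / y)) ^ 2) z := by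
  have hne : y * f (z / y) ≠ 0 := by
    have := hpos (z / y) (div_pos hz hy); positivity
  simp only [MC, one_div]
  exact (inner_fst f hf hz hy).inv hne

lemma MC_snd (hf : ContDiffOn ℝ 2 f (Set.Ioi 0)) (hpos : ∀ x > (0:ℝ), 0 < f x)
    {x z : ℝ} (hx : 0 < x) (hz : 0 < z) :
    HasDerivAt (fun q => MC f x q)
      (-(f (x / z) - (x / z) * deriv f (x / z)) / (z * f (x / z)) ^ 2) z := by
  have hne : z * f (x / z) ≠ 0 := by
    have := hpos (x / z) (div_pos hx hz); positivity
  simp only [MC, one_div]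
  exact (inner_snd f hf hx hz).inv hne

lemma d1log_eq (hf : ContDiffOn ℝ 2 f (Set.Ioi 0)) (hpos : ∀ x > (0:ℝ), 0 < f x)
    {z x : ℝ} (hz : 0 < z) (hx : 0 < x) :
    d1logMC f z x = -deriv f (z / x) / (x * f (z / x)) := by
  have hMC : 0 < MC f z x := MC_pos f hpos hz hx
  have hfp := hpos (z / x) (div_pos hz hx)
  have h := ((MC_fst f hf hpos hz hx).log hMC.ne').deriv
  rw [d1logMC, derivWithin_of_isOpen isOpen_Ioi hz, h, MC]
  field_simp

lemma deriv_f_one (hf : ContDiffOn ℝ 2 f (Set.Ioi 0)) (hf1 : f 1 = 1)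
    (hsym : ∀ x > (0:ℝ), f x = x * f (1/x)) : deriv f 1 = 1/2 := by
  have h1 : HasDerivAt (fun t : ℝ => t * f (1 / t)) (f 1 - deriv f 1) 1 := by
    have := inner_snd f hf one_pos one_pos
    norm_num at this
    simpa [one_div] using this
  have h2 : HasDerivAt f (f 1 - deriv f 1) 1 :=
    h1.congr_of_eventuallyEq
      (eventuallyEq_of_mem (Ioi_mem_nhds one_pos) fun t ht => hsym t ht)
  have h3 := h2.deriv
  rw [hf1] at h3
  linarith

lemma deriv_symm (hf : ContDiffOn ℝ 2 f (Set.Ioi 0))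
    (hsym : ∀ x > (0:ℝ), f x = x * f (1/x)) {t : ℝ} (ht : 0 < t) :
    deriv f t = f (1/t) - (1/t) * deriv f (1/t) := by
  have h1 : HasDerivAt (fun s : ℝ => s * f (1 / s)) (f (1 / t) - (1 / t) * deriv f (1 / t)) t :=
    inner_snd f hf one_pos ht
  have h2 : HasDerivAt f (f (1 / t) - (1 / t) * deriv f (1 / t)) t :=
    h1.congr_of_eventuallyEq
      (eventuallyEq_of_mem (Ioi_mem_nhds ht) fun s hs => hsym s hs)
  exact h2.deriv

lemma deriv2_symm (hf : ContDiffOn ℝ 2 f (Set.Ioi 0))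
    (hsym : ∀ x > (0:ℝ), f x = x * f (1/x)) {t : ℝ} (ht : 0 < t) :
    deriv (deriv f) t = (1/t)^3 * deriv (deriv f) (1/t) := by
  have hit : 0 < 1 / t := by positivity
  have heq : deriv f =ᶠ[𝓝 t] fun s => f (1 / s) - (1 / s) * deriv f (1 / s) :=
    eventuallyEq_of_mem (Ioi_mem_nhds ht) fun s hs => deriv_symm f hf hsym hs
  rw [heq.deriv_eq]
  have h1 : HasDerivAt (fun s : ℝ => 1 / s) (-(1 / t ^ 2)) t := by
    simp only [one_div]
    convert hasDerivAt_inv ht.ne' using 1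
  have h2 : HasDerivAt (fun s => f (1 / s)) (deriv f (1 / t) * (-(1 / t ^ 2))) t :=
    (hasDerivAt_f f hf hit).comp t h1
  have h3 : HasDerivAt (fun s => deriv f (1 / s)) (deriv (deriv f) (1 / t) * (-(1 / t ^ 2))) t :=
    (hasDerivAt_deriv_f f hf hit).comp t h1
  have h4 := h1.mul h3
  have h5 : HasDerivAt (fun s => f (1 / s) - 1 / s * deriv f (1 / s)) _ t := h2.sub h4
  rw [h5.deriv]
  field_simp
  all_goals ring

lemma cont_d1log_fst (hf : ContDiffOn ℝ 2 f (Set.Ioi 0)) (hpos : ∀ x > (0:ℝ), 0 < f x)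
    {z x : ℝ} (hz : 0 < z) (hx : 0 < x) :
    ContinuousAt (fun q => d1logMC f q x) z := by
  have hdx : 0 < z / x := div_pos hz hx
  have hc : ContinuousAt (fun q : ℝ => -deriv f (q / x) / (x * f (q / x))) z := by
    have h1 : ContinuousAt (fun q : ℝ => q / x) z := continuousAt_id.div_const x
    have h2 : ContinuousAt (fun q : ℝ => f (q / x)) z :=
      ContinuousAt.comp (x := z) (g := f) (f := fun q : ℝ => q / x)
        (hasDerivAt_f f hf hdx).continuousAt h1
    have h3 : ContinuousAt (fun q : ℝ => deriv f (q / x)) z :=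
      ContinuousAt.comp (x := z) (g := deriv f) (f := fun q : ℝ => q / x)
        (hasDerivAt_deriv_f f hf hdx).continuousAt h1
    have hne : x * f (z / x) ≠ 0 := by
      have := hpos (z / x) hdx; positivity
    exact h3.neg.div (continuousAt_const.mul h2) hne
  exact hc.congr
    (eventuallyEq_of_mem (Ioi_mem_nhds hz) fun q hq =>
      (d1log_eq f hf hpos hq hx).symm)

lemma cont_d1log_snd (hf : ContDiffOn ℝ 2 f (Set.Ioi 0)) (hpos : ∀ x > (0:ℝ), 0 < f x)
    {y z : ℝ} (hy : 0 < y) (hz : 0 < z) :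
    ContinuousAt (fun q => d1logMC f y q) z := by
  have hdx : 0 < y / z := div_pos hy hz
  have hc : ContinuousAt (fun q : ℝ => -deriv f (y / q) / (q * f (y / q))) z := by
    have h1 : ContinuousAt (fun q : ℝ => y / q) z :=
      continuousAt_const.div continuousAt_id hz.ne'
    have h2 : ContinuousAt (fun q : ℝ => f (y / q)) z :=
      ContinuousAt.comp (x := z) (g := f) (f := fun q : ℝ => y / q)
        (hasDerivAt_f f hf hdx).continuousAt h1
    have h3 : ContinuousAt (fun q : ℝ => deriv f (y / q)) z :=
      ContinuousAt.comp (x := z) (g := deriv f) (f := fun q : ℝ => y / q)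
        (hasDerivAt_deriv_f f hf hdx).continuousAt h1
    have hne : z * f (y / z) ≠ 0 := by
      have := hpos (y / z) hdx; positivity
    exact h3.neg.div (continuousAt_id.mul h2) hne
  exact hc.congr
    (eventuallyEq_of_mem (Ioi_mem_nhds hz) fun q hq =>
      (d1log_eq f hf hpos hy hq).symm)

lemma d1log_snd_deriv (hf : ContDiffOn ℝ 2 f (Set.Ioi 0)) (hpos : ∀ x > (0:ℝ), 0 < f x)
    {x y : ℝ} (hx : 0 < x) (hy : 0 < y) :
    HasDerivAt (fun q => d1logMC f y q)
      (((y/x) * deriv (deriv f) (y/x) * f (y/x) + deriv f (y/x) * f (y/x)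
          - (y/x) * (deriv f (y/x))^2) / (x^2 * (f (y/x))^2)) x := by
  have hv : 0 < y / x := div_pos hy hx
  have hF := hpos _ hv
  have h1 : HasDerivAt (fun q : ℝ => y / q) (-(y / x ^ 2)) x := by
    simp only [div_eq_mul_inv]
    refine ((hasDerivAt_inv hx.ne').const_mul y).congr_deriv (Eq.symm ?_)
    ring
  have h2 : HasDerivAt (fun q => deriv f (y / q)) (deriv (deriv f) (y / x) * (-(y / x ^ 2))) x :=
    (hasDerivAt_deriv_f f hf hv).comp x h1
  have h3 : HasDerivAt (fun q => q * f (y / q)) (f (y / x) - (y / x) * deriv f (y / x)) x :=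
    inner_snd f hf hy hx
  have hden : x * f (y / x) ≠ 0 := by positivity
  have h4 := h2.neg.div h3 hden
  refine HasDerivAt.congr_of_eventuallyEq ?_
    (eventuallyEq_of_mem (Ioi_mem_nhds hx) fun q hq => d1log_eq f hf hpos hy hq)
  refine h4.congr_deriv (Eq.symm ?_)
  simp only [Pi.mul_apply, Pi.neg_apply, Pi.sub_apply, id_eq]
  field_simp
  ring

end Aux

section Limits

variable (f : ℝ → ℝ)

lemma lim1a (hf : ContDiffOn ℝ 2 f (Set.Ioi 0)) (hpos : ∀ x > (0:ℝ), 0 < f x)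
    (hf1 : f 1 = 1) {x y : ℝ} (hx : 0 < x) (hy : 0 < y) (hxy : x ≠ y) :
    Tendsto (fun q => H1 f x q y) (𝓝[≠] x)
      (𝓝 (y * (y * f (x/y)^2 - x) / (x * (x-y)^2))) := by
  have hu : 0 < x / y := div_pos hx hy
  have hfu := hpos _ hu
  have hxy' : x - y ≠ 0 := sub_ne_zero.mpr hxy
  have hMxy : 0 < MC f x y := MC_pos f hpos hx hy
  have c1 : ContinuousAt (fun q => MC f x q) x := (MC_snd f hf hpos hx hx).continuousAt
  have c2 : ContinuousAt (fun q => MC f q y) x := (MC_fst f hf hpos hx hy).continuousAt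
  have hcont : ContinuousAt (fun q => H1 f x q y) x := by
    simp only [H1]
    apply ContinuousAt.div
    · exact c1.sub (continuousAt_const.mul c2)
    · exact ((continuousAt_const.mul (continuousAt_id.sub continuousAt_const)).mul
        continuousAt_const).mul c2
    · exact mul_ne_zero (mul_ne_zero (mul_ne_zero hxy' hxy') hMxy.ne') hMxy.ne'
  have t : Tendsto (fun q => H1 f x q y) (𝓝[≠] x) (𝓝 (H1 f x x y)) :=
    hcont.tendsto.mono_left nhdsWithin_le_nhds
  have hval : H1 f x x y = y * (y * f (x/y)^2 - x) / (x * (x-y)^2) := by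
    simp only [H1, MC, div_self hx.ne', hf1]
    field_simp
  rwa [hval] at t

lemma lim1b (hf : ContDiffOn ℝ 2 f (Set.Ioi 0)) (hpos : ∀ x > (0:ℝ), 0 < f x)
    (hf1 : f 1 = 1) (hsym : ∀ x > (0:ℝ), f x = x * f (1/x))
    {x y : ℝ} (hx : 0 < x) (hy : 0 < y) (hxy : x ≠ y) :
    Tendsto (fun q => H1 f x y q) (𝓝[≠] x)
      (𝓝 ((1/2 - (y/x) * deriv f (y/x) / f (y/x)) / (x - y))) := by
  have hv : 0 < y / x := div_pos hy hx
  have hfv := hpos _ hv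
  have hxy' : x - y ≠ 0 := sub_ne_zero.mpr hxy
  have hNx : MC f x y - x * MC f x x * MC f y x = 0 := by
    rw [MC_symm f hsym hx hy]
    simp only [MC, div_self hx.ne', hf1]
    field_simp
    ring
  have hDx : (x - x) * (y - x) * MC f x x * MC f y x = 0 := by simp
  have hdN := (hasDerivAt_const x (MC f x y)).sub
    (((hasDerivAt_id x).mul (MC_snd f hf hpos hx hx)).mul (MC_snd f hf hpos hy hx))
  have hdN' : HasDerivAt (fun q => MC f x y - q * MC f x q * MC f y q)
      ((f (y/x)/2 - (y/x) * deriv f (y/x)) / (x^2 * f (y/x)^2)) x := by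
    refine hdN.congr_deriv (Eq.symm ?_)
    simp only [Pi.mul_apply, Pi.neg_apply, Pi.sub_apply, id_eq]
    simp only [MC, div_self hx.ne', hf1, deriv_f_one f hf hf1 hsym]
    field_simp
    ring
  have hdD := ((((hasDerivAt_const x x).sub (hasDerivAt_id x)).mul
      ((hasDerivAt_const x y).sub (hasDerivAt_id x))).mul (MC_snd f hf hpos hx hx)).mul
      (MC_snd f hf hpos hy hx)
  have hdD' : HasDerivAt (fun q => (x - q) * (y - q) * MC f x q * MC f y q)
      ((x - y) / (x^2 * f (y/x))) x := by
    refine hdD.congr_deriv (Eq.symm ?_)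
    simp only [Pi.mul_apply, Pi.neg_apply, Pi.sub_apply, id_eq]
    simp only [id_eq, sub_self, zero_mul, mul_zero, add_zero, zero_add]
    simp only [MC, div_self hx.ne', hf1, deriv_f_one f hf hf1 hsym]
    field_simp
    ring
  have hslopeN := hasDerivAt_iff_tendsto_slope.mp hdN'
  have hslopeD := hasDerivAt_iff_tendsto_slope.mp hdD'
  have hDne : (x - y) / (x^2 * f (y/x)) ≠ 0 :=
    div_ne_zero hxy' (by positivity)
  have htend := hslopeN.div hslopeD hDne
  have heq : (fun q => slope (fun q => MC f x y - q * MC f x q * MC f y q) x q /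
      slope (fun q => (x - q) * (y - q) * MC f x q * MC f y q) x q)
      =ᶠ[𝓝[≠] x] (fun q => H1 f x y q) := by
    filter_upwards [self_mem_nhdsWithin] with q hq
    have hqx : q - x ≠ 0 := sub_ne_zero.mpr hq
    simp only [slope_def_field]
    rw [hNx, hDx, sub_zero, sub_zero, aux_div _ _ _ hqx]
    rfl
  have hfin := htend.congr' heq
  have hval : (f (y/x)/2 - (y/x) * deriv f (y/x)) / (x^2 * f (y/x)^2) /
      ((x - y) / (x^2 * f (y/x))) = (1/2 - (y/x) * deriv f (y/x) / f (y/x)) / (x - y) := by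
    field_simp
  rwa [hval] at hfin

lemma lim2a (hf : ContDiffOn ℝ 2 f (Set.Ioi 0)) (hpos : ∀ x > (0:ℝ), 0 < f x)
    (hf1 : f 1 = 1) {x y : ℝ} (hx : 0 < x) (hy : 0 < y) (hxy : x ≠ y) :
    Tendsto (fun q => H2 f x q y) (𝓝[≠] x)
      (𝓝 (x * (deriv f (x/y))^2 / (y^2 * f (x/y)^2))) := by
  have hu : 0 < x / y := div_pos hx hy
  have hfu := hpos _ hu
  have hxy' : x - y ≠ 0 := sub_ne_zero.mpr hxy
  have hMxy : 0 < MC f x y := MC_pos f hpos hx hy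
  have hMxx : 0 < MC f x x := MC_pos f hpos hx hx
  have hslope := hasDerivAt_iff_tendsto_slope.mp (MC_fst f hf hpos hx hy)
  have hsq := hslope.pow 2
  have cden : ContinuousAt (fun q => MC f x q * MC f x y * MC f q y) x :=
    (((MC_snd f hf hpos hx hx).continuousAt.mul continuousAt_const).mul
      (MC_fst f hf hpos hx hy).continuousAt)
  have hden : Tendsto (fun q => MC f x q * MC f x y * MC f q y) (𝓝[≠] x)
      (𝓝 (MC f x x * MC f x y * MC f x y)) := cden.tendsto.mono_left nhdsWithin_le_nhds
  have hdenne : MC f x x * MC f x y * MC f x y ≠ 0 :=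
    mul_ne_zero (mul_ne_zero hMxx.ne' hMxy.ne') hMxy.ne'
  have htend := hsq.div hden hdenne
  have hIoi : Set.Ioi (0:ℝ) ∈ 𝓝[≠] x := nhdsWithin_le_nhds (Ioi_mem_nhds hx)
  have heq : (fun q => (slope (fun w => MC f w y) x q)^2 /
      (MC f x q * MC f x y * MC f q y)) =ᶠ[𝓝[≠] x] (fun q => H2 f x q y) := by
    filter_upwards [self_mem_nhdsWithin, hIoi] with q hq hq0
    have hqx : q - x ≠ 0 := sub_ne_zero.mpr hq
    have hMqy : 0 < MC f q y := MC_pos f hpos hq0 hy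
    have hMxq : 0 < MC f x q := MC_pos f hpos hx hq0
    have hxq : x - q ≠ 0 := sub_ne_zero.mpr (Ne.symm hq)
    rw [H2, slope_def_field, div_pow]
    rw [div_div]
    rw [div_eq_div_iff (by positivity) (by
      have h2 : (x - q) ^ 2 > 0 := by positivity
      have h3 := hMxy.ne'
      positivity)]
    ring
  have hfin := htend.congr' heq
  have hval : (-deriv f (x/y) / (y * f (x/y)) ^ 2)^2 / (MC f x x * MC f x y * MC f x y)
      = x * (deriv f (x/y))^2 / (y^2 * f (x/y)^2) := by
    simp only [MC, div_self hx.ne', hf1]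
    field_simp
  rwa [hval] at hfin

lemma lim2b (hf : ContDiffOn ℝ 2 f (Set.Ioi 0)) (hpos : ∀ x > (0:ℝ), 0 < f x)
    (hf1 : f 1 = 1) (hsym : ∀ x > (0:ℝ), f x = x * f (1/x))
    {x y : ℝ} (hx : 0 < x) (hy : 0 < y) (hxy : x ≠ y) :
    Tendsto (fun q => H2 f x y q) (𝓝[≠] x)
      (𝓝 ((y * f (x/y) - x)^2 / (x * (x-y)^2))) := by
  have hu : 0 < x / y := div_pos hx hy
  have hfu := hpos _ hu
  have hxy' : x - y ≠ 0 := sub_ne_zero.mpr hxy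
  have hMxy : 0 < MC f x y := MC_pos f hpos hx hy
  have hMxx : 0 < MC f x x := MC_pos f hpos hx hx
  have hcont : ContinuousAt (fun q => H2 f x y q) x := by
    simp only [H2]
    apply ContinuousAt.div
    · exact ((MC_snd f hf hpos hx hx).continuousAt.sub
        (MC_snd f hf hpos hy hx).continuousAt).pow 2
    · exact ((continuousAt_const.mul (MC_snd f hf hpos hx hx).continuousAt)).mul
        (MC_snd f hf hpos hy hx).continuousAt
    · rw [MC_symm f hsym hy hx]
      have h2 : (x - y)^2 ≠ 0 := pow_ne_zero 2 hxy'
      exact mul_ne_zero (mul_ne_zero (mul_ne_zero h2 hMxy.ne') hMxx.ne') hMxy.ne'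
  have t : Tendsto (fun q => H2 f x y q) (𝓝[≠] x) (𝓝 (H2 f x y x)) :=
    hcont.tendsto.mono_left nhdsWithin_le_nhds
  have hval : H2 f x y x = (y * f (x/y) - x)^2 / (x * (x-y)^2) := by
    rw [H2, MC_symm f hsym hy hx]
    simp only [MC, div_self hx.ne', hf1]
    field_simp
  rwa [hval] at t

lemma lim3a (hf : ContDiffOn ℝ 2 f (Set.Ioi 0)) (hpos : ∀ x > (0:ℝ), 0 < f x)
    {x y : ℝ} (hx : 0 < x) (hy : 0 < y) (hxy : x ≠ y) :
    Tendsto (fun q => H3 f x q y) (𝓝[≠] x)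
      (𝓝 (y * (((y/x) * deriv (deriv f) (y/x) * f (y/x) + deriv f (y/x) * f (y/x)
          - (y/x) * (deriv f (y/x))^2) / (x^2 * (f (y/x))^2)))) := by
  have hd := d1log_snd_deriv f hf hpos hx hy
  have hs := hasDerivAt_iff_tendsto_slope.mp hd
  have ht := hs.const_mul y
  have heq : (fun q => y * slope (fun q => d1logMC f y q) x q)
      =ᶠ[𝓝[≠] x] (fun q => H3 f x q y) := by
    filter_upwards [self_mem_nhdsWithin] with q hq
    have hqx : q - x ≠ 0 := sub_ne_zero.mpr hq
    have h1 : x - q = -(q - x) := by ring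
    have h2 : d1logMC f y x - d1logMC f y q = -(d1logMC f y q - d1logMC f y x) := by ring
    rw [slope_def_field, H3, h1, h2, div_neg, neg_mul_neg]
    ring
  exact ht.congr' heq

lemma lim3b (hf : ContDiffOn ℝ 2 f (Set.Ioi 0)) (hpos : ∀ x > (0:ℝ), 0 < f x)
    (hf1 : f 1 = 1) (hsym : ∀ x > (0:ℝ), f x = x * f (1/x))
    {x y : ℝ} (hx : 0 < x) (hy : 0 < y) (hxy : x ≠ y) :
    Tendsto (fun q => H3 f x y q) (𝓝[≠] x)
      (𝓝 (x / (x - y) * (deriv f (x/y) / (y * f (x/y)) - 1/(2*x)))) := by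
  have hu : 0 < x / y := div_pos hx hy
  have hfu := hpos _ hu
  have hcont : ContinuousAt (fun q => H3 f x y q) x := by
    simp only [H3]
    exact (continuousAt_id.div_const (x - y)).mul
      ((cont_d1log_fst f hf hpos hx hx).sub (cont_d1log_fst f hf hpos hx hy))
  have t : Tendsto (fun q => H3 f x y q) (𝓝[≠] x) (𝓝 (H3 f x y x)) :=
    hcont.tendsto.mono_left nhdsWithin_le_nhds
  have hval : H3 f x y x = x / (x - y) * (deriv f (x/y) / (y * f (x/y)) - 1/(2*x)) := by
    rw [H3, d1log_eq f hf hpos hx hx, d1log_eq f hf hpos hx hy]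
    rw [div_self hx.ne', hf1, deriv_f_one f hf hf1 hsym]
    ring
  rwa [hval] at t

lemma lim4a (hf : ContDiffOn ℝ 2 f (Set.Ioi 0)) (hpos : ∀ x > (0:ℝ), 0 < f x)
    {x y : ℝ} (hx : 0 < x) (hy : 0 < y) (hxy : x ≠ y) :
    Tendsto (fun q => H4 f x q y) (𝓝[≠] x)
      (𝓝 (y * (deriv f (y/x))^2 / (x^2 * f (y/x)^2))) := by
  have hv : 0 < y / x := div_pos hy hx
  have hfv := hpos _ hv
  have hcont : ContinuousAt (fun q => H4 f x q y) x := by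
    simp only [H4]
    exact (continuousAt_const.mul continuousAt_const).mul (cont_d1log_snd f hf hpos hy hx)
  have t : Tendsto (fun q => H4 f x q y) (𝓝[≠] x) (𝓝 (H4 f x x y)) :=
    hcont.tendsto.mono_left nhdsWithin_le_nhds
  have hval : H4 f x x y = y * (deriv f (y/x))^2 / (x^2 * f (y/x)^2) := by
    rw [H4, d1log_eq f hf hpos hy hx]
    field_simp
  rwa [hval] at t

lemma lim4b (hf : ContDiffOn ℝ 2 f (Set.Ioi 0)) (hpos : ∀ x > (0:ℝ), 0 < f x)
    (hf1 : f 1 = 1) (hsym : ∀ x > (0:ℝ), f x = x * f (1/x))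
    {x y : ℝ} (hx : 0 < x) (hy : 0 < y) (hxy : x ≠ y) :
    Tendsto (fun q => H4 f x y q) (𝓝[≠] x)
      (𝓝 (deriv f (x/y) / (2 * y * f (x/y)))) := by
  have hu : 0 < x / y := div_pos hx hy
  have hfu := hpos _ hu
  have hcont : ContinuousAt (fun q => H4 f x y q) x := by
    simp only [H4]
    exact (continuousAt_id.mul (cont_d1log_fst f hf hpos hx hx)).mul
      (cont_d1log_fst f hf hpos hx hy)
  have t : Tendsto (fun q => H4 f x y q) (𝓝[≠] x) (𝓝 (H4 f x y x)) :=
    hcont.tendsto.mono_left nhdsWithin_le_nhds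
  have hval : H4 f x y x = deriv f (x/y) / (2 * y * f (x/y)) := by
    rw [H4, d1log_eq f hf hpos hx hx, d1log_eq f hf hpos hx hy]
    rw [div_self hx.ne', hf1, deriv_f_one f hf hf1 hsym]
    field_simp
  rwa [hval] at t

end Limits

set_option maxHeartbeats 4000000 in
/-- the scalar curvature
`sh₁ − (1/2)·sh₂ + 2·sh₃ − sh₄ + 3/2` at the state with eigenvalues
`x = (1+a)/2`, `y = (1−a)/2` equals the explicit formula `r(a)` of the paper,
with `c = (1−a)/(1+a)`. -/
theorem stmt_5 (f : ℝ → ℝ)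
    (hf : ContDiffOn ℝ 2 f (Set.Ioi 0))
    (hpos : ∀ x > (0:ℝ), 0 < f x)
    (hf1 : f 1 = 1)
    (hsym : ∀ x > (0:ℝ), f x = x * f (1/x))
    (a : ℝ) (ha1 : -1 < a) (ha2 : a < 1) (ha0 : a ≠ 0) :
    sh (H1 f) ((1+a)/2) ((1-a)/2)
      - (1/2) * sh (H2 f) ((1+a)/2) ((1-a)/2)
      + 2 * sh (H3 f) ((1+a)/2) ((1-a)/2)
      - sh (H4 f) ((1+a)/2) ((1-a)/2) + 3/2 =
    14*(a - 1) * (deriv f ((1-a)/(1+a)))^2 / ((1+a)^3 * (f ((1-a)/(1+a)))^2)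
      + 2*(a^2 + 7*a - 6) * deriv f ((1-a)/(1+a)) / ((1+a)^2 * a * f ((1-a)/(1+a)))
      + 8*(1 - a) * deriv (deriv f) ((1-a)/(1+a)) / ((1+a)^3 * f ((1-a)/(1+a)))
      + 2*(1+a) * f ((1-a)/(1+a)) / a^2
      + (3*a^3 + 5*a^2 + 8*a - 4) / (2*(1+a)*a^2) := by
  have ha1' : (0:ℝ) < 1 + a := by linarith
  have ha2' : (0:ℝ) < 1 - a := by linarith
  have hx : (0:ℝ) < (1+a)/2 := by linarith
  have hy : (0:ℝ) < (1-a)/2 := by linarith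
  have hxy : (1+a)/2 ≠ (1-a)/2 := fun h => ha0 (by linarith)
  set x : ℝ := (1+a)/2 with hxdef
  set y : ℝ := (1-a)/2 with hydef
  simp only [sh]
  rw [(lim1a f hf hpos hf1 hx hy hxy).limUnder_eq,
      (lim1b f hf hpos hf1 hsym hx hy hxy).limUnder_eq,
      (lim1a f hf hpos hf1 hy hx hxy.symm).limUnder_eq,
      (lim1b f hf hpos hf1 hsym hy hx hxy.symm).limUnder_eq,
      (lim2a f hf hpos hf1 hx hy hxy).limUnder_eq,
      (lim2b f hf hpos hf1 hsym hx hy hxy).limUnder_eq,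
      (lim2a f hf hpos hf1 hy hx hxy.symm).limUnder_eq,
      (lim2b f hf hpos hf1 hsym hy hx hxy.symm).limUnder_eq,
      (lim3a f hf hpos hx hy hxy).limUnder_eq,
      (lim3b f hf hpos hf1 hsym hx hy hxy).limUnder_eq,
      (lim3a f hf hpos hy hx hxy.symm).limUnder_eq,
      (lim3b f hf hpos hf1 hsym hy hx hxy.symm).limUnder_eq,
      (lim4a f hf hpos hx hy hxy).limUnder_eq,
      (lim4b f hf hpos hf1 hsym hx hy hxy).limUnder_eq,
      (lim4a f hf hpos hy hx hxy.symm).limUnder_eq,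
      (lim4b f hf hpos hf1 hsym hy hx hxy.symm).limUnder_eq]
  have hu : 0 < x / y := div_pos hx hy
  have e3 : deriv (deriv f) (x/y) = (y/x)^3 * deriv (deriv f) (y/x) := by
    have h := deriv2_symm f hf hsym hu
    rwa [one_div_div] at h
  have e2 : deriv f (x/y) = f (y/x) - (y/x) * deriv f (y/x) := by
    have h := deriv_symm f hf hsym hu
    rwa [one_div_div] at h
  have e1 : f (x/y) = (x/y) * f (y/x) := by
    have h := hsym (x/y) hu
    rwa [one_div_div] at h
  rw [e3, e2, e1]
  have hvc : y / x = (1-a)/(1+a) := by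
    rw [hxdef, hydef, div_div_div_comm]
    norm_num
  rw [hvc]
  have hc : (0:ℝ) < (1-a)/(1+a) := div_pos ha2' ha1'
  have hQ : 0 < f ((1-a)/(1+a)) := hpos _ hc
  set Q := f ((1-a)/(1+a)) with hQdef
  set Q1 := deriv f ((1-a)/(1+a)) with hQ1def
  set Q2 := deriv (deriv f) ((1-a)/(1+a)) with hQ2def
  rw [hxdef, hydef]
  rw [show (1+a)/2 - (1-a)/2 = a from by ring, show (1-a)/2 - (1+a)/2 = -a from by ring]
  have h2 : (2:ℝ) ≠ 0 := two_ne_zero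
  field_simp
  ring
end
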